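/- Let φ : ℂ → M_{n,m}(ℂ) be a matrix-valued rational function vanishing at infinity, all of whose entries have finitely many poles. Suppose φ(z) = 𝔇₁(z)⁻¹𝔇̃₁(z) = 𝔇₂(z)⁻¹𝔇̃₂(z), where 𝔇_i are n×n polynomial matrices with det 𝔇_i of degree k_i, 𝔇̃_i are n×m polynomial matrices, 𝔇_i(z)⁻¹𝔇̃_i(z) = O(z⁻¹) as z → ∞, and each full matrix ξ_i(z) = (𝔇_i(z), 𝔇̃_i(z)) has rank n for every z ∈ ℂ. Then k₁ = k₂ and there exists V(z) ∈ GL(n,ℂ[z]) with (𝔇₂, 𝔇̃₂) = V·(𝔇₁, 𝔇̃₁). -/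

import Mathlib

open Matrix Polynomial Asymptotics Filter

private theorem det_mul_expand {R : Type*} [CommRing R] {p : ℕ} {κ : Type*} [Fintype κ]
    [DecidableEq κ] (M : Matrix (Fin p) κ R) (N : Matrix κ (Fin p) R) :
    (M * N).det = ∑ g : Fin p → κ, (∏ i, M i (g i)) * (N.submatrix g id).det := by
  have h : (M * N) = fun i => ∑ k : κ, M i k • N k := by
    ext i j; simp [Matrix.mul_apply]
  rw [show (M * N).det = Matrix.detRowAlternating (M * N) from rfl, h]
  rw [show (Matrix.detRowAlternating : _) (fun i => ∑ k : κ, M i k • N k)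
    = ∑ g : Fin p → κ, Matrix.detRowAlternating (fun i => M i (g i) • N (g i)) from
      (Matrix.detRowAlternating : AlternatingMap R _ _ _).toMultilinearMap.map_sum _]
  refine Finset.sum_congr rfl fun g _ => ?_
  rw [show (Matrix.detRowAlternating : _) (fun i => M i (g i) • N (g i))
      = (∏ i, M i (g i)) • Matrix.detRowAlternating (fun i => N (g i)) from
      (Matrix.detRowAlternating : AlternatingMap R _ _ _).toMultilinearMap.map_smul_univ _ _]
  rw [smul_eq_mul]
  rfl

private theorem exists_right_inverse_of_rank {p : ℕ} {κ : Type*} [Fintype κ] [DecidableEq κ]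
    (A : Matrix (Fin p) κ ℂ) (h : A.rank = p) :
    ∃ B : Matrix κ (Fin p) ℂ, A * B = 1 := by
  have hsurj : Function.Surjective A.mulVecLin := by
    rw [← LinearMap.range_eq_top]
    apply Submodule.eq_top_of_finrank_eq
    rw [← Matrix.rank, h, Module.finrank_pi, Fintype.card_fin]
  obtain ⟨g, hg⟩ := A.mulVecLin.exists_rightInverse_of_surjective
    (LinearMap.range_eq_top.2 hsurj)
  refine ⟨LinearMap.toMatrix' g, ?_⟩
  apply Matrix.toLin'.injective
  rw [Matrix.toLin'_mul, Matrix.toLin'_toMatrix', Matrix.toLin'_apply',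
    Matrix.toLin'_one, hg]

private theorem no_right_inverse_of_minors_zero {p : ℕ} {κ : Type*} [Fintype κ] [DecidableEq κ]
    (A : Matrix (Fin p) κ ℂ) (hm : ∀ g : Fin p → κ, (A.submatrix id g).det = 0)
    (B : Matrix κ (Fin p) ℂ) (hB : A * B = 1) : False := by
  have h1 : ((A * B)ᵀ).det = 1 := by rw [hB]; simp
  rw [Matrix.transpose_mul, det_mul_expand] at h1
  have h2 : ∀ g : Fin p → κ, (Aᵀ.submatrix g id).det = 0 := by
    intro g
    have : Aᵀ.submatrix g id = (A.submatrix id g)ᵀ := by ext i j; rfl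
    rw [this, Matrix.det_transpose]; exact hm g
  simp only [h2, mul_zero, Finset.sum_const_zero] at h1
  exact one_ne_zero h1.symm

private theorem exists_poly_right_inverse {p : ℕ} {κ : Type*} [Fintype κ] [DecidableEq κ]
    (ξ : Matrix (Fin p) κ (Polynomial ℂ))
    (hr : ∀ z : ℂ, (ξ.map (Polynomial.eval z)).rank = p) :
    ∃ η : Matrix κ (Fin p) (Polynomial ℂ), ξ * η = 1 := by
  classical
  set d : (Fin p → κ) → Polynomial ℂ := fun g => (ξ.submatrix id g).det with hd
  have hev : ∀ (z : ℂ) (g : Fin p → κ),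
      Polynomial.eval z (d g) = ((ξ.map (Polynomial.eval z)).submatrix id g).det := by
    intro z g
    rw [Matrix.submatrix_map]
    exact (Polynomial.evalRingHom z).map_det _
  have hspan : (1 : Polynomial ℂ) ∈ Ideal.span (Set.range d) := by
    by_contra h1
    set I := Ideal.span (Set.range d) with hI
    have hIne : I ≠ ⊤ := fun ht => h1 (ht ▸ Submodule.mem_top)
    have hprin : I.IsPrincipal := IsPrincipalIdealRing.principal I
    set a := Submodule.IsPrincipal.generator I with ha
    have hnu : ¬ IsUnit a := fun hu =>
      hIne (I.eq_top_of_isUnit_mem (Submodule.IsPrincipal.generator_mem I) hu)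
    have hdvd : ∀ g, a ∣ d g := fun g =>
      (Submodule.IsPrincipal.mem_iff_generator_dvd I).1 (Ideal.subset_span ⟨g, rfl⟩)
    obtain ⟨z, hz⟩ : ∃ z : ℂ, ∀ g : Fin p → κ, Polynomial.eval z (d g) = 0 := by
      by_cases h0 : a = 0
      · exact ⟨0, fun g => by
          obtain ⟨c, hc⟩ := hdvd g
          rw [hc, h0, zero_mul, Polynomial.eval_zero]⟩
      · obtain ⟨z, hz⟩ := Complex.exists_root
          (Polynomial.degree_pos_of_ne_zero_of_nonunit h0 hnu)
        exact ⟨z, fun g => by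
          obtain ⟨c, hc⟩ := hdvd g
          rw [hc, Polynomial.eval_mul, hz.eq_zero, zero_mul]⟩
    obtain ⟨B, hB⟩ := exists_right_inverse_of_rank (ξ.map (Polynomial.eval z)) (hr z)
    exact no_right_inverse_of_minors_zero _ (fun g => by rw [← hev z g]; exact hz g) B hB
  obtain ⟨c, hc⟩ := Finsupp.mem_span_range_iff_exists_finsupp.1 hspan
  set P : (Fin p → κ) → Matrix κ (Fin p) (Polynomial ℂ) := fun g =>
    (Matrix.of fun j l => if g l = j then (1 : Polynomial ℂ) else 0) *
      (ξ.submatrix id g).adjugate with hPdef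
  have hP : ∀ g, ξ * P g = d g • 1 := by
    intro g
    have h1 : ξ * (Matrix.of fun j l => if g l = j then (1 : Polynomial ℂ) else 0)
        = ξ.submatrix id g := by
      ext i l
      rw [Matrix.mul_apply]
      simp only [Matrix.of_apply, mul_ite, mul_one, mul_zero]
      rw [Finset.sum_ite_eq Finset.univ (g l) (fun j => ξ i j)]
      simp [Matrix.submatrix_apply]
    rw [hPdef, ← Matrix.mul_assoc, h1, Matrix.mul_adjugate]
  refine ⟨c.sum fun g r => r • P g, ?_⟩
  calc ξ * (c.sum fun g r => r • P g)
      = c.sum fun g r => (r * d g) • 1 := by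
        rw [Finsupp.sum, Matrix.mul_sum, Finsupp.sum]
        refine Finset.sum_congr rfl fun g _ => ?_
        rw [Matrix.mul_smul, hP, smul_smul]
    _ = (c.sum fun g r => r * d g) • (1 : Matrix (Fin p) (Fin p) (Polynomial ℂ)) := by
        rw [Finsupp.sum, Finsupp.sum, Finset.sum_smul]
    _ = 1 := by
        have : (c.sum fun g r => r * d g) = 1 := by
          rw [← hc]; rfl
        rw [this, one_smul]

private theorem matrix_poly_ext {a b : Type*} (P Q : Matrix a b (Polynomial ℂ)) (S : Set ℂ)
    (hS : S.Infinite)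
    (h : ∀ z ∈ S, P.map (Polynomial.eval z) = Q.map (Polynomial.eval z)) : P = Q := by
  refine Matrix.ext fun i j => ?_
  rw [← sub_eq_zero]
  apply Polynomial.eq_zero_of_infinite_isRoot
  apply hS.mono
  intro z hz
  have := congrFun (congrFun (h z hz) i) j
  simp only [Matrix.map_apply] at this
  simp [Polynomial.IsRoot, this]

private theorem fromColumns_map' {a b c R S : Type*} (A : Matrix a b R) (B : Matrix a c R)
    (f : R → S) :
    (Matrix.fromCols A B).map f = Matrix.fromCols (A.map f) (B.map f) := by
  ext i (j | j) <;> rfl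

private theorem matrix_map_mul' {a b c : Type*} [Fintype b] (L : Matrix a b (Polynomial ℂ))
    (M : Matrix b c (Polynomial ℂ)) (z : ℂ) :
    (L * M).map (Polynomial.eval z) = L.map (Polynomial.eval z) * M.map (Polynomial.eval z) := by
  have := Matrix.map_mul (L := L) (M := M) (f := Polynomial.evalRingHom z)
  simpa using this

private theorem matrix_map_one' {a : Type*} [DecidableEq a] (z : ℂ) :
    (1 : Matrix a a (Polynomial ℂ)).map (Polynomial.eval z) = 1 :=
  Matrix.map_one _ (Polynomial.eval_zero) (Polynomial.eval_one)

private theorem eval_det' {q : ℕ} (M : Matrix (Fin q) (Fin q) (Polynomial ℂ)) (z : ℂ) :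
    (M.map (Polynomial.eval z)).det = Polynomial.eval z M.det :=
  ((Polynomial.evalRingHom z).map_det M).symm

private theorem half_unique {n m : ℕ}
    (D₁ D₂ : Matrix (Fin n) (Fin n) (Polynomial ℂ))
    (Dt₁ Dt₂ : Matrix (Fin n) (Fin m) (Polynomial ℂ))
    (S : Set ℂ) (hS : S.Infinite)
    (hu₁ : ∀ z ∈ S, IsUnit (D₁.map (Polynomial.eval z)).det)
    (hu₂ : ∀ z ∈ S, IsUnit (D₂.map (Polynomial.eval z)).det)
    (hφeq : ∀ z ∈ S, (D₁.map (Polynomial.eval z))⁻¹ * Dt₁.map (Polynomial.eval z)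
      = (D₂.map (Polynomial.eval z))⁻¹ * Dt₂.map (Polynomial.eval z))
    (η₁ : Matrix (Fin n ⊕ Fin m) (Fin n) (Polynomial ℂ))
    (hη₁ : Matrix.fromCols D₁ Dt₁ * η₁ = 1) :
    ∃ V : Matrix (Fin n) (Fin n) (Polynomial ℂ), D₂ = V * D₁ ∧ Dt₂ = V * Dt₁ ∧
      ∀ z ∈ S, V.map (Polynomial.eval z)
        = D₂.map (Polynomial.eval z) * (D₁.map (Polynomial.eval z))⁻¹ := by
  set V := Matrix.fromCols D₂ Dt₂ * η₁ with hVdef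
  have hV : ∀ z ∈ S, V.map (Polynomial.eval z)
      = D₂.map (Polynomial.eval z) * (D₁.map (Polynomial.eval z))⁻¹ := by
    intro z hz
    set A₁ := D₁.map (Polynomial.eval z)
    set At₁ := Dt₁.map (Polynomial.eval z)
    set A₂ := D₂.map (Polynomial.eval z)
    set At₂ := Dt₂.map (Polynomial.eval z)
    have hW₁ : (A₂ * A₁⁻¹) * A₁ = A₂ := by
      rw [Matrix.mul_assoc, Matrix.nonsing_inv_mul _ (hu₁ z hz), Matrix.mul_one]
    have hW₂ : (A₂ * A₁⁻¹) * At₁ = At₂ := by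
      rw [Matrix.mul_assoc, hφeq z hz, ← Matrix.mul_assoc,
        Matrix.mul_nonsing_inv _ (hu₂ z hz), Matrix.one_mul]
    calc V.map (Polynomial.eval z)
        = Matrix.fromCols A₂ At₂ * η₁.map (Polynomial.eval z) := by
          rw [hVdef, matrix_map_mul', fromColumns_map']
      _ = ((A₂ * A₁⁻¹) * Matrix.fromCols A₁ At₁) * η₁.map (Polynomial.eval z) := by
          rw [Matrix.mul_fromCols, hW₁, hW₂]
      _ = (A₂ * A₁⁻¹) * ((Matrix.fromCols D₁ Dt₁ * η₁).map (Polynomial.eval z)) := by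
          rw [matrix_map_mul', fromColumns_map', Matrix.mul_assoc]
      _ = A₂ * A₁⁻¹ := by rw [hη₁, matrix_map_one', Matrix.mul_one]
  refine ⟨V, ?_, ?_, hV⟩
  · refine matrix_poly_ext _ _ S hS fun z hz => ?_
    rw [matrix_map_mul', hV z hz, Matrix.mul_assoc,
      Matrix.nonsing_inv_mul _ (hu₁ z hz), Matrix.mul_one]
  · refine matrix_poly_ext _ _ S hS fun z hz => ?_
    rw [matrix_map_mul', hV z hz, Matrix.mul_assoc, hφeq z hz, ← Matrix.mul_assoc,
      Matrix.mul_nonsing_inv _ (hu₂ z hz), Matrix.one_mul]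

/-- Uniqueness of the semi-local moduli-matrix data representing a given
Grassmannian sigma-model instanton: if `φ(z) = 𝔇₁⁻¹𝔇̃₁ = 𝔇₂⁻¹𝔇̃₂` with
`𝔇ᵢ⁻¹𝔇̃ᵢ = O(z⁻¹)` at infinity and the full matrices `ξᵢ(z) = (𝔇ᵢ(z), 𝔇̃ᵢ(z))` of
rank `n` everywhere, then `k₁ = k₂` and the two data are related by an element of
`GL(n, ℂ[z])`. -/
theorem semilocal_data_unique (n m k₁ k₂ : ℕ)
    (φ : ℂ → Matrix (Fin n) (Fin m) ℂ)
    (D₁ D₂ : Matrix (Fin n) (Fin n) (Polynomial ℂ))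
    (Dt₁ Dt₂ : Matrix (Fin n) (Fin m) (Polynomial ℂ))
    (hdeg₁ : D₁.det.degree = (k₁ : WithBot ℕ))
    (hdeg₂ : D₂.det.degree = (k₂ : WithBot ℕ))
    (hφ₁ : ∀ z : ℂ, IsUnit (D₁.map (Polynomial.eval z)).det →
      φ z = (D₁.map (Polynomial.eval z))⁻¹ * Dt₁.map (Polynomial.eval z))
    (hφ₂ : ∀ z : ℂ, IsUnit (D₂.map (Polynomial.eval z)).det →
      φ z = (D₂.map (Polynomial.eval z))⁻¹ * Dt₂.map (Polynomial.eval z))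
    (hO₁ : ∀ a b, (fun z : ℂ =>
        ((D₁.map (Polynomial.eval z))⁻¹ * Dt₁.map (Polynomial.eval z)) a b)
      =O[Bornology.cobounded ℂ] fun z => z⁻¹)
    (hO₂ : ∀ a b, (fun z : ℂ =>
        ((D₂.map (Polynomial.eval z))⁻¹ * Dt₂.map (Polynomial.eval z)) a b)
      =O[Bornology.cobounded ℂ] fun z => z⁻¹)
    (hrank₁ : ∀ z : ℂ,
      (Matrix.fromCols (D₁.map (Polynomial.eval z))
        (Dt₁.map (Polynomial.eval z))).rank = n)
    (hrank₂ : ∀ z : ℂ,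
      (Matrix.fromCols (D₂.map (Polynomial.eval z))
        (Dt₂.map (Polynomial.eval z))).rank = n) :
    k₁ = k₂ ∧ ∃ V : Matrix (Fin n) (Fin n) (Polynomial ℂ),
      IsUnit V.det ∧ D₂ = V * D₁ ∧ Dt₂ = V * Dt₁ := by
  classical
  have hdet₁ : D₁.det ≠ 0 := fun h => by
    rw [h, Polynomial.degree_zero] at hdeg₁
    exact absurd hdeg₁.symm (by simp)
  have hdet₂ : D₂.det ≠ 0 := fun h => by
    rw [h, Polynomial.degree_zero] at hdeg₂
    exact absurd hdeg₂.symm (by simp)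
  set S : Set ℂ := {z | Polynomial.eval z D₁.det ≠ 0 ∧ Polynomial.eval z D₂.det ≠ 0} with hSdef
  have hS : S.Infinite := by
    have hfin : Sᶜ.Finite := by
      refine Set.Finite.subset ((Polynomial.finite_setOf_isRoot hdet₁).union
        (Polynomial.finite_setOf_isRoot hdet₂)) ?_
      intro z hz
      simp only [hSdef, Set.mem_compl_iff, Set.mem_setOf_eq, not_and_or, not_not] at hz
      simpa [Polynomial.IsRoot] using hz
    simpa using hfin.infinite_compl
  have hu₁ : ∀ z ∈ S, IsUnit (D₁.map (Polynomial.eval z)).det := by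
    intro z hz
    rw [eval_det']
    exact isUnit_iff_ne_zero.2 hz.1
  have hu₂ : ∀ z ∈ S, IsUnit (D₂.map (Polynomial.eval z)).det := by
    intro z hz
    rw [eval_det']
    exact isUnit_iff_ne_zero.2 hz.2
  have hφeq : ∀ z ∈ S, (D₁.map (Polynomial.eval z))⁻¹ * Dt₁.map (Polynomial.eval z)
      = (D₂.map (Polynomial.eval z))⁻¹ * Dt₂.map (Polynomial.eval z) := fun z hz =>
    (hφ₁ z (hu₁ z hz)).symm.trans (hφ₂ z (hu₂ z hz))
  obtain ⟨η₁, hη₁⟩ := exists_poly_right_inverse (Matrix.fromCols D₁ Dt₁) (fun z => by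
    rw [fromColumns_map']; exact hrank₁ z)
  obtain ⟨η₂, hη₂⟩ := exists_poly_right_inverse (Matrix.fromCols D₂ Dt₂) (fun z => by
    rw [fromColumns_map']; exact hrank₂ z)
  obtain ⟨V, hVD, hVDt, hV⟩ := half_unique D₁ D₂ Dt₁ Dt₂ S hS hu₁ hu₂ hφeq η₁ hη₁
  obtain ⟨V', hV'D, hV'Dt, hV'⟩ := half_unique D₂ D₁ Dt₂ Dt₁ S hS hu₂ hu₁
    (fun z hz => (hφeq z hz).symm) η₂ hη₂
  have hVV' : V * V' = 1 := by
    refine matrix_poly_ext _ _ S hS fun z hz => ?_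
    rw [matrix_map_mul', hV z hz, hV' z hz, matrix_map_one', Matrix.mul_assoc,
      ← Matrix.mul_assoc ((D₁.map (Polynomial.eval z))⁻¹),
      Matrix.nonsing_inv_mul _ (hu₁ z hz), Matrix.one_mul,
      Matrix.mul_nonsing_inv _ (hu₂ z hz)]
  have hdetV : IsUnit V.det :=
    IsUnit.of_mul_eq_one V'.det (by rw [← Matrix.det_mul, hVV', Matrix.det_one])
  refine ⟨?_, V, hdetV, hVD, hVDt⟩
  have hdd : D₂.det = V.det * D₁.det := by rw [hVD, Matrix.det_mul]
  rw [hdd, Polynomial.degree_mul, Polynomial.degree_eq_zero_of_isUnit hdetV, hdeg₁,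
    zero_add] at hdeg₂
  exact_mod_cast hdeg₂
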